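/- (Entry of the Gr(3,7) twist table: T*(X^{123567}) = Δ₁₂₇Δ₂₃₄·X^{134567}.) For all vectors v₁,…,v₇ ∈ ℝ³, set w_i := v_{i+1}×v_{i+2} with indices taken modulo 7 in {1,…,7}, and write Δ_{abc} := det(v_a,v_b,v_c). Then det(w₁×w₂, w₃×w₅, w₆×w₇) = Δ₁₂₇·Δ₂₃₄·det(v₁×v₃, v₄×v₅, v₆×v₇). -/
import Mathlib


/-- Determinant of the 3×3 real matrix with columns `a`, `b`, `c`. -/
noncomputable def det3 (a b c : Fin 3 → ℝ) : ℝ :=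
  (Matrix.of ![a, b, c]).transpose.det

/-- The standard cross product on `ℝ³`. -/
def cross (a b : Fin 3 → ℝ) : Fin 3 → ℝ := crossProduct a b

/-- Gr(3,7) twist table entry: `T*(X^{123567}) = Δ₁₂₇Δ₂₃₄ · X^{134567}`. -/
theorem twist_X123567 (v₁ v₂ v₃ v₄ v₅ v₆ v₇ w₁ w₂ w₃ w₄ w₅ w₆ w₇ : Fin 3 → ℝ)
    (hw₁ : w₁ = cross v₂ v₃) (hw₂ : w₂ = cross v₃ v₄) (hw₃ : w₃ = cross v₄ v₅)
    (hw₄ : w₄ = cross v₅ v₆) (hw₅ : w₅ = cross v₆ v₇) (hw₆ : w₆ = cross v₇ v₁)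
    (hw₇ : w₇ = cross v₁ v₂) :
    det3 (cross w₁ w₂) (cross w₃ w₅) (cross w₆ w₇)
      = det3 v₁ v₂ v₇ * det3 v₂ v₃ v₄
          * det3 (cross v₁ v₃) (cross v₄ v₅) (cross v₆ v₇) := by
  subst hw₁ hw₂ hw₃ hw₄ hw₅ hw₆ hw₇
  simp only [det3, cross, crossProduct, Matrix.det_fin_three, Matrix.transpose_apply,
    Matrix.of_apply, Matrix.cons_val', Matrix.cons_val_zero, Matrix.cons_val_one,
    Matrix.head_cons, Matrix.cons_val_two, Matrix.tail_cons, Matrix.empty_val',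
    Matrix.cons_val_fin_one, Matrix.head_fin_const, LinearMap.mk₂_apply,
    Matrix.cons_val_succ, Pi.sub_apply, Pi.mul_apply]
  ring
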